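/- Let 0 < λ ≤ 1/2 and μ = sqrt(λ(1-λ)). Let A be the N×N matrix with entries A_{ij} = λ μ^{i-j} for i ≥ j, A_{ij} = μ for i = j-1, and A_{ij} = 0 for i < j-1. Then the spectral radius of A is at most (1 + sqrt(1-λ))² λ. -/

import Mathlib

open scoped ENNReal NNReal

/-- Gershgorin-type bound on the spectral radius of the staircase
block matrix: `A i j = λ μ^(i-j)` for `i ≥ j`, `μ` for `i = j - 1`, `0` otherwise,
with `μ = √(λ(1-λ))`; then the spectral radius of `A` is at most `(1+√(1-λ))² λ`. -/
theorem stmt_2 {N : ℕ} (hN : 0 < N) (lam : ℝ) (hlam0 : 0 < lam) (hlam2 : lam ≤ 1 / 2)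
    (mu : ℝ) (hmu : mu = Real.sqrt (lam * (1 - lam)))
    (A : Matrix (Fin N) (Fin N) ℝ)
    (hA : ∀ i j : Fin N, A i j =
      if (j : ℕ) ≤ (i : ℕ) then lam * mu ^ ((i : ℕ) - (j : ℕ))
      else if (i : ℕ) + 1 = (j : ℕ) then mu else 0) :
    (⨆ μ' ∈ spectrum ℂ (A.map (fun x : ℝ => (x : ℂ))), (‖μ'‖₊ : ℝ≥0∞))
      ≤ ENNReal.ofReal ((1 + Real.sqrt (1 - lam)) ^ 2 * lam) := by
  have h1lam : (0:ℝ) < 1 - lam := by linarith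
  set s := Real.sqrt (1 - lam) with hs
  have hspos : 0 < s := Real.sqrt_pos.2 h1lam
  have hs2 : s ^ 2 = 1 - lam := Real.sq_sqrt h1lam.le
  set t := Real.sqrt lam with ht
  have htpos : 0 < t := Real.sqrt_pos.2 hlam0
  have ht2 : t ^ 2 = lam := Real.sq_sqrt hlam0.le
  have hmu' : mu = t * s := by rw [hmu, ht, hs, Real.sqrt_mul hlam0.le]
  have hmupos : 0 < mu := by rw [hmu']; positivity
  set r := mu + t with hr
  have hrpos : 0 < r := by positivity
  have hr' : r = t * (1 + s) := by rw [hr, hmu']; ring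
  set q := mu / r with hq
  have hqv : q = s / (1 + s) := by
    rw [hq, hmu', hr', mul_div_mul_left _ _ htpos.ne']
  have hqpos : 0 < q := div_pos hmupos hrpos
  have hq1 : q < 1 := by
    rw [hqv, div_lt_one (by linarith)]; linarith
  have hgeom1 : ∀ n : ℕ, ∑ i ∈ Finset.range n, q ^ i ≤ (1 - q)⁻¹ := by
    intro n
    rw [geom_sum_eq hq1.ne n, div_le_iff_of_neg (by linarith : q - 1 < 0)]
    have h : (1 - q)⁻¹ * (q - 1) = -1 := by
      rw [inv_mul_eq_div, div_eq_iff (by linarith : (1:ℝ) - q ≠ 0)]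
      ring
    nlinarith [pow_nonneg hqpos.le n]
  have hqs : q * (1 - q)⁻¹ = s := by
    rw [hqv]
    have h1s : (0:ℝ) < 1 + s := by linarith
    have h : 1 - s / (1 + s) = (1 + s)⁻¹ := by field_simp; ring
    rw [h, inv_inv, div_mul_cancel₀ _ h1s.ne']
  have hgeom : ∀ k : ℕ, ∑ m ∈ Finset.range k, q ^ (k - m) ≤ s := by
    intro k
    have h1 : ∑ m ∈ Finset.range k, q ^ (k - m) = ∑ m ∈ Finset.range k, q ^ (m + 1) := by
      rw [← Finset.sum_range_reflect (fun j => q ^ (j + 1)) k]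
      refine Finset.sum_congr rfl fun m hm => ?_
      rw [Finset.mem_range] at hm
      congr 1
      omega
    have h2 : ∑ m ∈ Finset.range k, q ^ (m + 1) = q * ∑ m ∈ Finset.range k, q ^ m := by
      rw [Finset.mul_sum]
      exact Finset.sum_congr rfl fun m _ => (pow_succ' q m)
    rw [h1, h2, ← hqs]
    exact mul_le_mul_of_nonneg_left (hgeom1 k) hqpos.le
  -- matrix setup
  set B : Matrix (Fin N) (Fin N) ℝ :=
    (Matrix.diagonal fun j : Fin N => (r ^ (j : ℕ))⁻¹) * A *
      Matrix.diagonal (fun j : Fin N => r ^ (j : ℕ)) with hB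
  have hBentry : ∀ i j, B i j = (r ^ (i : ℕ))⁻¹ * A i j * r ^ (j : ℕ) := by
    intro i j
    rw [hB, Matrix.mul_diagonal, Matrix.diagonal_mul]
  set φ : Matrix (Fin N) (Fin N) ℝ →+* Matrix (Fin N) (Fin N) ℂ :=
    Complex.ofRealHom.mapMatrix with hφdef
  have hφ : ∀ M : Matrix (Fin N) (Fin N) ℝ, φ M = M.map (fun x : ℝ => (x : ℂ)) :=
    fun M => rfl
  have hdd' : Matrix.diagonal (fun j : Fin N => r ^ (j : ℕ)) *
      Matrix.diagonal (fun j : Fin N => (r ^ (j : ℕ))⁻¹) = 1 := by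
    have h : (fun j : Fin N => r ^ (j : ℕ) * (r ^ (j : ℕ))⁻¹) = fun _ => (1:ℝ) := by
      funext j; exact mul_inv_cancel₀ (pow_ne_zero _ hrpos.ne')
    rw [Matrix.diagonal_mul_diagonal, h, Matrix.diagonal_one]
  have hd'd : Matrix.diagonal (fun j : Fin N => (r ^ (j : ℕ))⁻¹) *
      Matrix.diagonal (fun j : Fin N => r ^ (j : ℕ)) = 1 := by
    have h : (fun j : Fin N => (r ^ (j : ℕ))⁻¹ * r ^ (j : ℕ)) = fun _ => (1:ℝ) := by
      funext j; exact inv_mul_cancel₀ (pow_ne_zero _ hrpos.ne')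
    rw [Matrix.diagonal_mul_diagonal, h, Matrix.diagonal_one]
  set u : (Matrix (Fin N) (Fin N) ℂ)ˣ :=
    ⟨φ (Matrix.diagonal fun j : Fin N => r ^ (j : ℕ)),
     φ (Matrix.diagonal fun j : Fin N => (r ^ (j : ℕ))⁻¹),
     by rw [← map_mul, hdd', map_one],
     by rw [← map_mul, hd'd, map_one]⟩ with hu
  have hspec : spectrum ℂ (A.map (fun x : ℝ => (x : ℂ)))
      = spectrum ℂ (B.map (fun x : ℝ => (x : ℂ))) := by
    rw [← hφ, ← hφ]
    have hconj : (↑u⁻¹ : Matrix (Fin N) (Fin N) ℂ) * φ A * (↑u : Matrix (Fin N) (Fin N) ℂ) = φ B := by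
      show φ (Matrix.diagonal fun j : Fin N => (r ^ (j : ℕ))⁻¹) * φ A *
          φ (Matrix.diagonal fun j : Fin N => r ^ (j : ℕ)) = φ B
      rw [hB, map_mul, map_mul]
    rw [← spectrum.units_conjugate' (a := φ A) (u := u), hconj]
  rw [hspec]
  refine iSup₂_le fun z hz => ?_
  have hz' : Module.End.HasEigenvalue
      (Matrix.toLin' (B.map (fun x : ℝ => (x : ℂ)))) z := by
    rw [Module.End.hasEigenvalue_iff_mem_spectrum]
    have e1 : Matrix.toLin' (B.map (fun x : ℝ => (x : ℂ)))
        = Matrix.toLinAlgEquiv' (B.map (fun x : ℝ => (x : ℂ))) :=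
      LinearMap.ext fun v => rfl
    rw [e1, AlgEquiv.spectrum_eq]
    exact hz
  obtain ⟨k, hk⟩ := eigenvalue_mem_ball hz'
  rw [Metric.mem_closedBall] at hk
  have hrkne : (r : ℝ) ^ (k : ℕ) ≠ 0 := pow_ne_zero _ hrpos.ne'
  have hBkk : B k k = lam := by
    rw [hBentry, hA, if_pos le_rfl, Nat.sub_self, pow_zero, mul_one]
    field_simp
  have hCkk : (B.map (fun x : ℝ => (x : ℂ))) k k = (lam : ℂ) := by
    rw [Matrix.map_apply, hBkk]
  have hnormval : ∀ j, ‖(B.map (fun x : ℝ => (x : ℂ))) k j‖ = |B k j| := by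
    intro j
    rw [Matrix.map_apply, Complex.norm_real, Real.norm_eq_abs]
  -- the row sum bound
  set g : Fin N → ℝ := fun j =>
    (if (j : ℕ) < (k : ℕ) then lam * q ^ ((k : ℕ) - (j : ℕ)) else 0) +
    (if (k : ℕ) + 1 = (j : ℕ) then mu * r else 0) with hg
  have hgnonneg : ∀ j, 0 ≤ g j := by
    intro j
    simp only [hg]
    have h1 : 0 ≤ (if (j : ℕ) < (k : ℕ) then lam * q ^ ((k : ℕ) - (j : ℕ)) else 0) := by
      split <;> positivity
    have h2 : 0 ≤ (if (k : ℕ) + 1 = (j : ℕ) then mu * r else 0) := by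
      split <;> positivity
    linarith
  have hterm : ∀ j ∈ Finset.univ.erase k, |B k j| ≤ g j := by
    intro j hj
    have hjk : j ≠ k := Finset.ne_of_mem_erase hj
    have hjk' : (j : ℕ) ≠ (k : ℕ) := fun h => hjk (Fin.ext h)
    rcases lt_or_gt_of_ne hjk' with hlt | hgt
    · -- j < k
      have hle : (j : ℕ) ≤ (k : ℕ) := hlt.le
      have hpow : r ^ (k : ℕ) = r ^ ((k : ℕ) - (j : ℕ)) * r ^ (j : ℕ) := by
        rw [← pow_add]
        congr 1
        omega
      have hval : B k j = lam * q ^ ((k : ℕ) - (j : ℕ)) := by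
        rw [hBentry, hA, if_pos hle, hq, div_pow, hpow]
        have hne : r ^ ((k : ℕ) - (j : ℕ)) ≠ 0 := pow_ne_zero _ hrpos.ne'
        field_simp
      rw [hval, abs_of_nonneg (by positivity)]; simp only [hg]
      simp only [if_pos hlt]
      have : ¬ ((k : ℕ) + 1 = (j : ℕ)) := by omega
      rw [if_neg this]
      linarith
    · -- k < j
      have hnle : ¬ ((j : ℕ) ≤ (k : ℕ)) := not_le.2 hgt
      by_cases hsucc : (k : ℕ) + 1 = (j : ℕ)
      · have hval : B k j = mu * r := by
          rw [hBentry, hA, if_neg hnle, if_pos hsucc, ← hsucc, pow_succ]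
          field_simp
        rw [hval, abs_of_nonneg (by positivity)]; simp only [hg]
        rw [if_neg (by omega : ¬ ((j : ℕ) < (k : ℕ))), if_pos hsucc]
        linarith
      · have hval : B k j = 0 := by
          rw [hBentry, hA, if_neg hnle, if_neg hsucc]
          ring
        rw [hval, abs_zero]
        exact hgnonneg j
  have hsum1 : ∑ j : Fin N,
      (if (j : ℕ) < (k : ℕ) then lam * q ^ ((k : ℕ) - (j : ℕ)) else 0) ≤ lam * s := by
    rw [Fin.sum_univ_eq_sum_range
      (fun m => if m < (k : ℕ) then lam * q ^ ((k : ℕ) - m) else 0) N]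
    rw [← Finset.sum_subset (Finset.range_subset_range.2 k.isLt.le)
      (fun x _ hx => by
        rw [Finset.mem_range, not_lt] at hx
        rw [if_neg (not_lt.2 hx)])]
    calc ∑ m ∈ Finset.range (k : ℕ),
          (if m < (k : ℕ) then lam * q ^ ((k : ℕ) - m) else 0)
        = ∑ m ∈ Finset.range (k : ℕ), lam * q ^ ((k : ℕ) - m) := by
          refine Finset.sum_congr rfl fun m hm => ?_
          rw [Finset.mem_range] at hm
          rw [if_pos hm]
      _ = lam * ∑ m ∈ Finset.range (k : ℕ), q ^ ((k : ℕ) - m) := by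
          rw [Finset.mul_sum]
      _ ≤ lam * s := mul_le_mul_of_nonneg_left (hgeom _) hlam0.le
  have hsum2 : ∑ j : Fin N,
      (if (k : ℕ) + 1 = (j : ℕ) then mu * r else 0) ≤ mu * r := by
    rw [Fin.sum_univ_eq_sum_range (fun m => if (k : ℕ) + 1 = m then mu * r else 0) N]
    rw [Finset.sum_ite_eq]
    split
    · exact le_rfl
    · positivity
  have hrowsum : ∑ j ∈ Finset.univ.erase k,
      ‖(B.map (fun x : ℝ => (x : ℂ))) k j‖ ≤ lam * s + mu * r := by
    calc ∑ j ∈ Finset.univ.erase k, ‖(B.map (fun x : ℝ => (x : ℂ))) k j‖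
        = ∑ j ∈ Finset.univ.erase k, |B k j| := by
          exact Finset.sum_congr rfl fun j _ => hnormval j
      _ ≤ ∑ j ∈ Finset.univ.erase k, g j := Finset.sum_le_sum hterm
      _ ≤ ∑ j : Fin N, g j :=
          Finset.sum_le_sum_of_subset_of_nonneg (Finset.erase_subset _ _)
            (fun j _ _ => hgnonneg j)
      _ = (∑ j : Fin N, (if (j : ℕ) < (k : ℕ) then lam * q ^ ((k : ℕ) - (j : ℕ)) else 0))
          + ∑ j : Fin N, (if (k : ℕ) + 1 = (j : ℕ) then mu * r else 0) := by
          rw [← Finset.sum_add_distrib]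
      _ ≤ lam * s + mu * r := add_le_add hsum1 hsum2
  have hmur : mu * r = lam * (s * (1 + s)) := by
    rw [hmu', hr', ← ht2]
    ring
  have hznorm : ‖z‖ ≤ (1 + s) ^ 2 * lam := by
    have h1 : dist z ((lam : ℝ) : ℂ) ≤ lam * s + mu * r := by
      rw [← hCkk]
      exact hk.trans hrowsum
    have h2 : ‖z‖ ≤ ‖z - ((lam : ℝ) : ℂ)‖ + ‖((lam : ℝ) : ℂ)‖ := by
      calc ‖z‖ = ‖z - ((lam : ℝ) : ℂ) + ((lam : ℝ) : ℂ)‖ := by ring_nf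
        _ ≤ _ := norm_add_le _ _
    rw [dist_eq_norm] at h1
    have h3 : ‖((lam : ℝ) : ℂ)‖ = lam := by
      rw [Complex.norm_real, Real.norm_eq_abs, abs_of_pos hlam0]
    nlinarith [h1, h2, h3]
  rw [← ENNReal.ofReal_coe_nnreal, coe_nnnorm]
  exact ENNReal.ofReal_le_ofReal hznorm
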